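/- For 1 ≤ k ≤ n−2 and 1 ≤ p ≤ n−k−1, let K⃗(n,k,p) be the digraph K⃗_k ▽ (K⃗_p ∪ K⃗_{n−p−k}) together with all arcs from K⃗_p to K⃗_{n−p−k}. Then the adjacency spectral radius of K⃗(n,k,p) equals (n−2+√(4p²−4(n−k)p+n²))/2, and consequently for any strongly connected digraph G⃗ on n vertices with vertex connectivity k, ρ(G⃗) ≤ (n−2+√((n−2)²+4k))/2, with equality iff G⃗ ≅ K⃗(n,k,1) or K⃗(n,k,n−k−1). -/

import Mathlib

open Matrix BigOperators
open scoped Classical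

/-- The spectral radius of a real square matrix: the largest modulus of a
(complex) eigenvalue. -/
noncomputable def specRad {n : Type*} [Fintype n] [DecidableEq n]
    (A : Matrix n n ℝ) : ℝ :=
  ⨆ μ : spectrum ℂ (A.map Complex.ofReal), ‖μ.val‖

/-- `reachIn A k u v` : there is a directed walk of length `k` from `u` to `v`
in the digraph with arc relation `A`. -/
def reachIn {V : Type*} (A : V → V → Prop) : ℕ → V → V → Prop
  | 0 => fun u v => u = v
  | (k + 1) => fun u v => ∃ w, A u w ∧ reachIn A k w v

/-- A digraph is strongly connected if every vertex is reachable from every vertex. -/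
def StronglyConn {V : Type*} (A : V → V → Prop) : Prop :=
  ∀ u v : V, ∃ k : ℕ, reachIn A k u v

/-- The 0-1 adjacency matrix of a digraph. -/
noncomputable def adjMat {V : Type*} [Fintype V] (A : V → V → Prop) : Matrix V V ℝ :=
  fun u v => if A u v then 1 else 0

/-- The directed distance from `u` to `v`: the length of a shortest directed walk. -/
noncomputable def ddist {V : Type*} (A : V → V → Prop) (u v : V) : ℕ :=
  sInf {k : ℕ | reachIn A k u v}

/-- The distance matrix of a digraph. -/
noncomputable def distMat {V : Type*} [Fintype V] (A : V → V → Prop) : Matrix V V ℝ :=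
  fun u v => (ddist A u v : ℝ)

/-- The induced subdigraph on a set `s` is strongly connected: any two vertices of `s`
are joined by a directed walk staying inside `s`. -/
def StronglyConnOn {V : Type*} (A : V → V → Prop) (s : Set V) : Prop :=
  ∀ u ∈ s, ∀ v ∈ s, ∃ k : ℕ, reachIn (fun a b => A a b ∧ a ∈ s ∧ b ∈ s) k u v

/-- The digraph has vertex connectivity `k`: deleting any fewer than `k` vertices
leaves it strongly connected, and some set of `k` vertices destroys strong
connectivity. -/
def VertexConnEq {V : Type*} [Fintype V] [DecidableEq V] (A : V → V → Prop) (k : ℕ) : Prop :=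
  (∀ S : Finset V, S.card < k → StronglyConnOn A {v | v ∉ S}) ∧
  (∃ S : Finset V, S.card = k ∧ ¬ StronglyConnOn A {v | v ∉ S})

/-- The digraph `K⃗(n,k,p) = K⃗_k ▽ (K⃗_p ∪ K⃗_{n-p-k})` plus all arcs from `K⃗_p` to
`K⃗_{n-p-k}`: vertices `0,…,p-1` form `K⃗_p`, vertices `p,…,p+k-1` form `K⃗_k`,
the rest form `K⃗_{n-p-k}`; every ordered pair of distinct vertices is an arc except
those from the last block to the first block. -/
def Karc (n k p : ℕ) : Fin n → Fin n → Prop :=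
  fun u v => u ≠ v ∧ ¬(p + k ≤ (u : ℕ) ∧ (v : ℕ) < p)

set_option linter.unusedSectionVars false
set_option linter.unreachableTactic false
set_option linter.unusedTactic false
set_option maxHeartbeats 1000000
open Finset


lemma specMemIff {N : Type*} [Fintype N] [DecidableEq N] (M : Matrix N N ℂ) (μ : ℂ) :
    μ ∈ spectrum ℂ M ↔ ∃ v, v ≠ 0 ∧ M.mulVec v = μ • v := by
  rw [← AlgEquiv.spectrum_eq (Matrix.toLinAlgEquiv' : Matrix N N ℂ ≃ₐ[ℂ] _),
    ← Module.End.hasEigenvalue_iff_mem_spectrum]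
  constructor
  · intro h
    obtain ⟨v, hv⟩ := h.exists_hasEigenvector
    refine ⟨v, hv.2, ?_⟩
    have := hv.apply_eq_smul
    simpa [Matrix.toLinAlgEquiv'_apply, Matrix.toLin'_apply] using this
  · rintro ⟨v, hv0, hv⟩
    apply Module.End.hasEigenvalue_of_hasEigenvector (x := v)
    refine ⟨Module.End.mem_eigenspace_iff.mpr ?_, hv0⟩
    simpa [Matrix.toLinAlgEquiv'_apply, Matrix.toLin'_apply] using hv

lemma specNonempty {N : Type*} [Fintype N] [DecidableEq N] [Nonempty N] (M : Matrix N N ℂ) :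
    (spectrum ℂ M).Nonempty := by
  rw [← AlgEquiv.spectrum_eq (Matrix.toLinAlgEquiv' : Matrix N N ℂ ≃ₐ[ℂ] _)]
  obtain ⟨μ, hμ⟩ := Module.End.exists_eigenvalue (Matrix.toLinAlgEquiv' M)
  exact ⟨μ, Module.End.hasEigenvalue_iff_mem_spectrum.mp hμ⟩

lemma specFinite {N : Type*} [Fintype N] [DecidableEq N] (M : Matrix N N ℂ) :
    (spectrum ℂ M).Finite := by
  rw [← AlgEquiv.spectrum_eq (Matrix.toLinAlgEquiv' : Matrix N N ℂ ≃ₐ[ℂ] _)]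
  have := Module.End.finite_hasEigenvalue (R := ℂ) (M := N → ℂ) (Matrix.toLinAlgEquiv' M)
  refine this.subset ?_
  intro μ hμ
  exact Module.End.hasEigenvalue_iff_mem_spectrum.mpr hμ
lemma sRad_le {N : Type*} [Fintype N] [DecidableEq N] (A : Matrix N N ℝ) (ρ : ℝ) (hρ : 0 ≤ ρ)
    (h : ∀ μ ∈ spectrum ℂ (A.map Complex.ofReal), ‖μ‖ ≤ ρ) : specRad A ≤ ρ := by
  unfold specRad
  rcases isEmpty_or_nonempty (spectrum ℂ (A.map Complex.ofReal)) with he | hne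
  · rw [Real.iSup_of_isEmpty]
    exact hρ
  · exact ciSup_le fun μ => h μ.1 μ.2

lemma sRad_eq {N : Type*} [Fintype N] [DecidableEq N] (A : Matrix N N ℝ) (ρ : ℝ) (hρ : 0 ≤ ρ)
    (h : ∀ μ ∈ spectrum ℂ (A.map Complex.ofReal), ‖μ‖ ≤ ρ)
    (hmem : ∃ μ ∈ spectrum ℂ (A.map Complex.ofReal), ‖μ‖ = ρ) : specRad A = ρ := by
  obtain ⟨μ₀, hμ₀, hn⟩ := hmem
  refine le_antisymm (sRad_le A ρ hρ h) ?_
  have hbdd : BddAbove (Set.range fun μ : spectrum ℂ (A.map Complex.ofReal) => ‖μ.val‖) := by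
    refine ⟨ρ, ?_⟩
    rintro x ⟨μ, rfl⟩
    exact h μ.1 μ.2
  calc ρ = ‖(⟨μ₀, hμ₀⟩ : spectrum ℂ (A.map Complex.ofReal)).val‖ := hn.symm
    _ ≤ _ := le_ciSup hbdd _

lemma specFinite' {N : Type*} [Fintype N] [DecidableEq N] (M : Matrix N N ℂ) :
    (spectrum ℂ M).Finite := by
  rw [← AlgEquiv.spectrum_eq (Matrix.toLinAlgEquiv' : Matrix N N ℂ ≃ₐ[ℂ] _)]
  exact (Module.End.finite_hasEigenvalue (R := ℂ) (M := N → ℂ) (Matrix.toLinAlgEquiv' M)).subset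
    fun μ hμ => Module.End.hasEigenvalue_iff_mem_spectrum.mpr hμ

lemma specNonempty' {N : Type*} [Fintype N] [DecidableEq N] [Nonempty N] (M : Matrix N N ℂ) :
    (spectrum ℂ M).Nonempty := by
  rw [← AlgEquiv.spectrum_eq (Matrix.toLinAlgEquiv' : Matrix N N ℂ ≃ₐ[ℂ] _)]
  obtain ⟨μ, hμ⟩ := Module.End.exists_eigenvalue (Matrix.toLinAlgEquiv' M)
  exact ⟨μ, Module.End.hasEigenvalue_iff_mem_spectrum.mp hμ⟩

lemma sRad_attained {N : Type*} [Fintype N] [DecidableEq N] [Nonempty N] (A : Matrix N N ℝ) :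
    ∃ μ ∈ spectrum ℂ (A.map Complex.ofReal), ‖μ‖ = specRad A := by
  have hfin := specFinite' (A.map Complex.ofReal)
  have hne := specNonempty' (A.map Complex.ofReal)
  have : Finite (spectrum ℂ (A.map Complex.ofReal)) := hfin.to_subtype
  have : Nonempty (spectrum ℂ (A.map Complex.ofReal)) := hne.to_subtype
  obtain ⟨μm, hμm⟩ := Finite.exists_max (fun μ : spectrum ℂ (A.map Complex.ofReal) => ‖μ.val‖)
  refine ⟨μm.1, μm.2, ?_⟩
  refine le_antisymm ?_ (ciSup_le hμm)
  have hbdd : BddAbove (Set.range fun μ : spectrum ℂ (A.map Complex.ofReal) => ‖μ.val‖) := by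
    refine ⟨‖μm.val‖, ?_⟩
    rintro x ⟨μ, rfl⟩
    exact hμm μ
  exact le_ciSup hbdd μm

lemma sRad_congr {N : Type*} [Fintype N] [DecidableEq N] (A B : Matrix N N ℝ)
    (h : spectrum ℂ (A.map Complex.ofReal) = spectrum ℂ (B.map Complex.ofReal)) :
    specRad A = specRad B := by
  unfold specRad
  rw [h]
section PF
variable {N : Type*} [Fintype N] [DecidableEq N]

private lemma step1 {M : Matrix N N ℝ} (hM0 : ∀ i j, 0 ≤ M i j)
    {μ : ℂ} {v : N → ℂ} (hv : (M.map Complex.ofReal).mulVec v = μ • v) (i : N) :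
    ‖μ‖ * ‖v i‖ ≤ ∑ j, M i j * ‖v j‖ := by
  have h1 : (μ • v) i = ∑ j, (M i j : ℂ) * v j := by
    rw [← hv]; simp [Matrix.mulVec, dotProduct, Matrix.map_apply]
  calc ‖μ‖ * ‖v i‖ = ‖(μ • v) i‖ := by simp [norm_mul]
    _ = ‖∑ j, (M i j : ℂ) * v j‖ := by rw [h1]
    _ ≤ ∑ j, ‖(M i j : ℂ) * v j‖ := norm_sum_le _ _
    _ = ∑ j, M i j * ‖v j‖ := by
        refine Finset.sum_congr rfl fun j _ => ?_
        rw [norm_mul, Complex.norm_real, Real.norm_eq_abs, abs_of_nonneg (hM0 i j)]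

private lemma sum_ux_pos {u : N → ℝ} (hu : ∀ i, 0 < u i) {v : N → ℂ} (hv0 : v ≠ 0) :
    0 < ∑ j, u j * ‖v j‖ := by
  obtain ⟨i, hi⟩ : ∃ i, v i ≠ 0 := by
    by_contra h; push_neg at h; exact hv0 (funext h)
  refine Finset.sum_pos' (fun j _ => mul_nonneg (hu j).le (norm_nonneg _)) ⟨i, Finset.mem_univ i, ?_⟩
  exact mul_pos (hu i) (norm_pos_iff.mpr hi)

private lemma left_sum {B : Matrix N N ℝ} {u : N → ℝ} {ρ : ℝ}
    (hleft : ∀ j, ∑ i, u i * B i j = ρ * u j) (x : N → ℝ) :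
    ∑ i, u i * (B.mulVec x) i = ρ * ∑ j, u j * x j := by
  simp only [Matrix.mulVec, dotProduct, Finset.mul_sum]
  rw [Finset.sum_comm]
  refine Finset.sum_congr rfl fun j _ => ?_
  have : ∑ i, u i * (B i j * x j) = (∑ i, u i * B i j) * x j := by
    rw [Finset.sum_mul]; exact Finset.sum_congr rfl fun i _ => by ring
  rw [this, hleft j]; ring

lemma pf_norm_le (B M : Matrix N N ℝ) (u : N → ℝ) (ρ : ℝ)
    (hu : ∀ i, 0 < u i)
    (hM0 : ∀ i j, 0 ≤ M i j) (hMB : ∀ i j, M i j ≤ B i j)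
    (hleft : ∀ j, ∑ i, u i * B i j = ρ * u j)
    {μ : ℂ} {v : N → ℂ} (hv0 : v ≠ 0) (hv : (M.map Complex.ofReal).mulVec v = μ • v) :
    ‖μ‖ ≤ ρ := by
  set x : N → ℝ := fun j => ‖v j‖ with hx
  have hxnn : ∀ j, 0 ≤ x j := fun j => norm_nonneg _
  have hMx : ∀ i, (M.mulVec x) i ≤ (B.mulVec x) i := fun i =>
    Finset.sum_le_sum fun j _ => mul_le_mul_of_nonneg_right (hMB i j) (hxnn j)
  have key : ‖μ‖ * ∑ j, u j * x j ≤ ρ * ∑ j, u j * x j := by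
    calc ‖μ‖ * ∑ j, u j * x j = ∑ j, u j * (‖μ‖ * x j) := by
          rw [Finset.mul_sum]; exact Finset.sum_congr rfl fun j _ => by ring
      _ ≤ ∑ i, u i * (M.mulVec x) i := Finset.sum_le_sum fun i _ =>
          mul_le_mul_of_nonneg_left (step1 hM0 hv i) (hu i).le
      _ ≤ ∑ i, u i * (B.mulVec x) i := Finset.sum_le_sum fun i _ =>
          mul_le_mul_of_nonneg_left (hMx i) (hu i).le
      _ = ρ * ∑ j, u j * x j := left_sum hleft x
  exact le_of_mul_le_mul_right key (sum_ux_pos hu hv0)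

lemma pf_rigid (B M : Matrix N N ℝ) (u : N → ℝ) (ρ : ℝ)
    (hu : ∀ i, 0 < u i)
    (hM0 : ∀ i j, 0 ≤ M i j) (hMB : ∀ i j, M i j ≤ B i j)
    (hleft : ∀ j, ∑ i, u i * B i j = ρ * u j)
    (hpos : ∀ x : N → ℝ, (∀ i, 0 ≤ x i) → x ≠ 0 → B.mulVec x = ρ • x → ∀ i, 0 < x i)
    {μ : ℂ} {v : N → ℂ} (hv0 : v ≠ 0) (hv : (M.map Complex.ofReal).mulVec v = μ • v)
    (hμρ : ‖μ‖ = ρ) : M = B := by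
  set x : N → ℝ := fun j => ‖v j‖ with hx
  have hxnn : ∀ j, 0 ≤ x j := fun j => norm_nonneg _
  have hx0 : x ≠ 0 := by
    obtain ⟨i, hi⟩ : ∃ i, v i ≠ 0 := by
      by_contra h; push_neg at h; exact hv0 (funext h)
    intro h
    exact hi (norm_eq_zero.mp (congrFun h i))
  have hρx : ∀ i, ρ * x i ≤ (M.mulVec x) i := fun i => hμρ ▸ step1 hM0 hv i
  have hMx : ∀ i, (M.mulVec x) i ≤ (B.mulVec x) i := fun i =>
    Finset.sum_le_sum fun j _ => mul_le_mul_of_nonneg_right (hMB i j) (hxnn j)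
  have hsum0 : ∑ i, u i * ((B.mulVec x) i - ρ * x i) = 0 := by
    rw [Finset.sum_congr rfl (fun i _ => mul_sub (u i) _ _), Finset.sum_sub_distrib,
      left_sum hleft x]
    rw [sub_eq_zero, Finset.mul_sum]
    exact Finset.sum_congr rfl fun i _ => by ring
  have heach : ∀ i, (B.mulVec x) i = ρ * x i := by
    have hterm : ∀ i ∈ Finset.univ, 0 ≤ u i * ((B.mulVec x) i - ρ * x i) := fun i _ =>
      mul_nonneg (hu i).le (by linarith [hρx i, hMx i])
    intro i
    have := (Finset.sum_eq_zero_iff_of_nonneg hterm).mp hsum0 i (Finset.mem_univ i)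
    have h2 := (hu i).ne'
    have : (B.mulVec x) i - ρ * x i = 0 := by
      rcases mul_eq_zero.mp this with h | h
      · exact absurd h h2
      · exact h
    linarith
  have hBx : B.mulVec x = ρ • x := funext fun i => by simpa using heach i
  have hxpos := hpos x hxnn hx0 hBx
  have hMBx : ∀ i, (M.mulVec x) i = (B.mulVec x) i := fun i =>
    le_antisymm (hMx i) (by rw [heach i]; exact hρx i)
  ext i j
  have hzero : ∑ j, (B i j - M i j) * x j = 0 := by
    have : ∑ j, (B i j - M i j) * x j = (B.mulVec x) i - (M.mulVec x) i := by
      simp [Matrix.mulVec, dotProduct, sub_mul, Finset.sum_sub_distrib]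
    rw [this, hMBx i, sub_self]
  have hterm : ∀ jj ∈ Finset.univ, 0 ≤ (B i jj - M i jj) * x jj := fun jj _ =>
    mul_nonneg (by linarith [hMB i jj]) (hxnn jj)
  have := (Finset.sum_eq_zero_iff_of_nonneg hterm).mp hzero j (Finset.mem_univ j)
  rcases mul_eq_zero.mp this with h | h
  · linarith
  · exact absurd h (hxpos j).ne'

end PF
lemma tts (n m₁ m₂ : ℕ) (h1 : m₁ ≤ m₂) (h2 : m₂ ≤ n) (x y z : ℝ) :
    ∑ j : Fin n, (if (j:ℕ) < m₁ then x else if (j:ℕ) < m₂ then y else z)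
      = m₁ * x + ((m₂ - m₁ : ℕ) : ℝ) * y + ((n - m₂ : ℕ) : ℝ) * z := by
  rw [Fin.sum_univ_eq_sum_range (fun j => if j < m₁ then x else if j < m₂ then y else z) n]
  rw [Finset.range_eq_Ico, ← Finset.sum_Ico_consecutive _ (Nat.zero_le m₂) h2,
    ← Finset.sum_Ico_consecutive _ (Nat.zero_le m₁) h1]
  have e1 : ∑ j ∈ Finset.Ico 0 m₁, (if j < m₁ then x else if j < m₂ then y else z) = m₁ * x := by
    rw [Finset.sum_congr rfl (fun j hj => by
      rw [if_pos (Finset.mem_Ico.mp hj).2]), Finset.sum_const, Nat.card_Ico, nsmul_eq_mul,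
      Nat.sub_zero]
  have e2 : ∑ j ∈ Finset.Ico m₁ m₂, (if j < m₁ then x else if j < m₂ then y else z)
      = ((m₂ - m₁ : ℕ) : ℝ) * y := by
    rw [Finset.sum_congr rfl (fun j hj => by
      obtain ⟨hj1, hj2⟩ := Finset.mem_Ico.mp hj
      rw [if_neg (by omega : ¬ j < m₁), if_pos hj2]),
      Finset.sum_const, Nat.card_Ico, nsmul_eq_mul]
  have e3 : ∑ j ∈ Finset.Ico m₂ n, (if j < m₁ then x else if j < m₂ then y else z)
      = ((n - m₂ : ℕ) : ℝ) * z := by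
    rw [Finset.sum_congr rfl (fun j hj => by
      obtain ⟨hj1, hj2⟩ := Finset.mem_Ico.mp hj
      rw [if_neg (by omega : ¬ j < m₁), if_neg (by omega : ¬ j < m₂)]),
      Finset.sum_const, Nat.card_Ico, nsmul_eq_mul]
  rw [e1, e2, e3]

lemma ots (n m : ℕ) (h : m ≤ n) (x y : ℝ) :
    ∑ j : Fin n, (if (j:ℕ) < m then x else y) = m * x + ((n - m : ℕ) : ℝ) * y := by
  have := tts n m m le_rfl h x x y
  have he : ∀ j : Fin n, (if (j:ℕ) < m then x else if (j:ℕ) < m then x else y)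
      = (if (j:ℕ) < m then x else y) := by
    intro j; by_cases hj : (j:ℕ) < m <;> simp [hj]
  rw [Finset.sum_congr rfl (fun j _ => he j)] at this
  rw [this, Nat.sub_self]
  push_cast
  ring

section KarcFacts
variable {n k p q : ℕ}

lemma karc_mulVec (hn : n = p + k + q) (a c : ℝ) (i : Fin n) :
    ((adjMat (Karc n k p)).mulVec (fun j => if (j:ℕ) < p + k then a else c)) i
      = (if (i:ℕ) < p + k
          then ((p:ℝ)+(k:ℝ)) * a + (q:ℝ) * c - a
          else (k:ℝ) * a + (q:ℝ) * c - c) := by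
  classical
  have hpk : p + k ≤ n := by omega
  have key : ∀ j : Fin n, adjMat (Karc n k p) i j * (if (j:ℕ) < p + k then a else c)
      = (if (p + k ≤ (i:ℕ) ∧ (j:ℕ) < p) then 0 else (if (j:ℕ) < p + k then a else c))
        - (if j = i then (if (i:ℕ) < p + k then a else c) else 0) := by
    intro j
    by_cases hji : j = i
    · subst hji
      have h2 : ¬ (p + k ≤ (j:ℕ) ∧ (j:ℕ) < p) := by omega
      simp [adjMat, Karc, h2]
    · have hij : i ≠ j := fun h => hji h.symm
      by_cases hc : p + k ≤ (i:ℕ) ∧ (j:ℕ) < p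
      · simp [adjMat, Karc, hji, hc.1, hc.2]
      · simp [adjMat, Karc, hji, hij, hc]
  have hmain : ((adjMat (Karc n k p)).mulVec (fun j => if (j:ℕ) < p + k then a else c)) i
      = (∑ j : Fin n, (if (p + k ≤ (i:ℕ) ∧ (j:ℕ) < p) then 0
          else (if (j:ℕ) < p + k then a else c)))
        - (if (i:ℕ) < p + k then a else c) := by
    simp only [Matrix.mulVec, dotProduct]
    rw [Finset.sum_congr rfl (fun j _ => key j), Finset.sum_sub_distrib]
    congr 1
    simp
  rw [hmain]
  by_cases hi : (i:ℕ) < p + k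
  · rw [if_pos hi, if_pos hi]
    have he : ∀ j : Fin n, (if (p + k ≤ (i:ℕ) ∧ (j:ℕ) < p) then 0
        else (if (j:ℕ) < p + k then a else c)) = (if (j:ℕ) < p + k then a else c) := by
      intro j; rw [if_neg (by omega)]
    rw [Finset.sum_congr rfl (fun j _ => he j), ots n (p+k) hpk a c]
    have h2 : ((n - (p+k) : ℕ) : ℝ) = (q : ℝ) := by congr 1; omega
    rw [h2]
    push_cast
    ring
  · rw [if_neg hi, if_neg hi]
    have hple : p + k ≤ (i:ℕ) := by omega
    have he : ∀ j : Fin n, (if (p + k ≤ (i:ℕ) ∧ (j:ℕ) < p) then 0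
        else (if (j:ℕ) < p + k then a else c))
        = (if (j:ℕ) < p then 0 else if (j:ℕ) < p + k then a else c) := by
      intro j
      by_cases hj : (j:ℕ) < p
      · rw [if_pos ⟨hple, hj⟩, if_pos hj]
      · rw [if_neg (fun h => hj h.2), if_neg hj]
    rw [Finset.sum_congr rfl (fun j _ => he j), tts n p (p+k) (by omega) hpk 0 a c]
    have h1 : ((p + k - p : ℕ) : ℝ) = (k : ℝ) := by congr 1; omega
    have h2 : ((n - (p+k) : ℕ) : ℝ) = (q : ℝ) := by congr 1; omega
    rw [h1, h2]
    ring

lemma karc_vecMul (hn : n = p + k + q) (α b : ℝ) (j : Fin n) :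
    ∑ i : Fin n, (if (i:ℕ) < p then α else b) * adjMat (Karc n k p) i j
      = (if (j:ℕ) < p
          then (p:ℝ) * α + (k:ℝ) * b - α
          else (p:ℝ) * α + ((k:ℝ)+(q:ℝ)) * b - b) := by
  classical
  have hpk : p + k ≤ n := by omega
  have key : ∀ i : Fin n, (if (i:ℕ) < p then α else b) * adjMat (Karc n k p) i j
      = (if ((j:ℕ) < p ∧ p + k ≤ (i:ℕ)) then 0 else (if (i:ℕ) < p then α else b))
        - (if i = j then (if (j:ℕ) < p then α else b) else 0) := by
    intro i
    by_cases hij : i = j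
    · subst hij
      have h2 : ¬ ((i:ℕ) < p ∧ p + k ≤ (i:ℕ)) := by omega
      simp [adjMat, Karc, h2]
    · by_cases hc : (j:ℕ) < p ∧ p + k ≤ (i:ℕ)
      · simp [adjMat, Karc, hij, hc.1, hc.2]
      · have h3 : ¬ (p + k ≤ (i:ℕ) ∧ (j:ℕ) < p) := fun h => hc ⟨h.2, h.1⟩
        simp [adjMat, Karc, hij, h3, hc]
  rw [Finset.sum_congr rfl (fun i _ => key i), Finset.sum_sub_distrib]
  have hsub : ∑ i : Fin n, (if i = j then (if (j:ℕ) < p then α else b) else 0)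
      = (if (j:ℕ) < p then α else b) := by simp
  rw [hsub]
  by_cases hj : (j:ℕ) < p
  · rw [if_pos hj]
    have he : ∀ i : Fin n, (if ((j:ℕ) < p ∧ p + k ≤ (i:ℕ)) then 0
        else (if (i:ℕ) < p then α else b))
        = (if (i:ℕ) < p then α else if (i:ℕ) < p + k then b else 0) := by
      intro i
      by_cases hi1 : (i:ℕ) < p
      · rw [if_neg (by omega), if_pos hi1, if_pos hi1]
      · by_cases hi2 : (i:ℕ) < p + k
        · rw [if_neg (by omega), if_neg hi1, if_neg hi1, if_pos hi2]
        · rw [if_pos ⟨hj, by omega⟩, if_neg hi1, if_neg hi2]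
    rw [Finset.sum_congr rfl (fun i _ => he i), tts n p (p+k) (by omega) hpk α b 0]
    have h1 : ((p + k - p : ℕ) : ℝ) = (k : ℝ) := by congr 1; omega
    rw [h1, if_pos hj]
    all_goals ring
  · rw [if_neg hj]
    have he : ∀ i : Fin n, (if ((j:ℕ) < p ∧ p + k ≤ (i:ℕ)) then 0
        else (if (i:ℕ) < p then α else b)) = (if (i:ℕ) < p then α else b) := by
      intro i; rw [if_neg (fun h => hj h.1)]
    rw [Finset.sum_congr rfl (fun i _ => he i), ots n p (by omega) α b]
    have h2 : ((n - p : ℕ) : ℝ) = (k : ℝ) + (q : ℝ) := by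
      rw [show n - p = k + q by omega]; push_cast; ring
    rw [h2, if_neg hj]
    all_goals ring

end KarcFacts

section Eig
variable {n k p q : ℕ}

lemma karc_eig (hk : 1 ≤ k) (hp : 1 ≤ p) (hq : 1 ≤ q) (hn : n = p + k + q) :
    ∃ ρ : ℝ, ρ = ((n:ℝ) - 2 + Real.sqrt ((n:ℝ)^2 - 4*(p:ℝ)*(q:ℝ)))/2 ∧ 0 ≤ ρ ∧
    ∃ u w : Fin n → ℝ, (∀ i, 0 < u i) ∧ (∀ i, 0 < w i) ∧
      (∀ j, ∑ i, u i * adjMat (Karc n k p) i j = ρ * u j) ∧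
      (adjMat (Karc n k p)).mulVec w = ρ • w := by
  have hnR : (n:ℝ) = (p:ℝ) + (k:ℝ) + (q:ℝ) := by rw [hn]; push_cast; ring
  have hkR : (1:ℝ) ≤ (k:ℝ) := by exact_mod_cast hk
  have hpR : (1:ℝ) ≤ (p:ℝ) := by exact_mod_cast hp
  have hqR : (1:ℝ) ≤ (q:ℝ) := by exact_mod_cast hq
  set D : ℝ := (n:ℝ)^2 - 4*(p:ℝ)*(q:ℝ) with hD
  have hDge : ((q:ℝ) - (p:ℝ))^2 ≤ D := by
    rw [hD, hnR]; nlinarith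
  have hD0 : 0 ≤ D := le_trans (sq_nonneg _) hDge
  set s : ℝ := Real.sqrt D with hs
  have hs2 : s^2 = D := Real.sq_sqrt hD0
  have hsge : |(q:ℝ) - (p:ℝ)| ≤ s := by
    rw [hs, ← Real.sqrt_sq_eq_abs]
    exact Real.sqrt_le_sqrt hDge
  have hs0 : 0 ≤ s := Real.sqrt_nonneg _
  set ρ : ℝ := ((n:ℝ) - 2 + s)/2 with hρ
  have hρ0 : 0 ≤ ρ := by rw [hρ, hnR]; nlinarith
  have hquad : ρ^2 = ((n:ℝ) - 2)*ρ + ((n:ℝ) - 1 - (p:ℝ)*(q:ℝ)) := by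
    rw [hρ]
    have : s^2 = ((n:ℝ)-2)^2 + 4*((n:ℝ) - 1 - (p:ℝ)*(q:ℝ)) := by rw [hs2, hD]; ring
    nlinarith [this]
  set a : ℝ := ρ - (q:ℝ) + 1 with ha
  set b : ℝ := ρ - (p:ℝ) + 1 with hb
  have ha0 : 0 < a := by
    have h1 : (q:ℝ) - (p:ℝ) ≤ s := le_trans (le_abs_self _) hsge
    rw [ha, hρ, hnR]; nlinarith
  have hb0 : 0 < b := by
    have h1 : (p:ℝ) - (q:ℝ) ≤ s := le_trans (le_abs_self _) (by rwa [abs_sub_comm] at hsge)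
    rw [hb, hρ, hnR]; nlinarith
  have hk0 : (0:ℝ) < (k:ℝ) := by linarith
  refine ⟨ρ, rfl, hρ0, fun i => if (i:ℕ) < p then (k:ℝ) else b,
    fun j => if (j:ℕ) < p + k then a else (k:ℝ), ?_, ?_, ?_, ?_⟩
  · intro i; by_cases h : (i:ℕ) < p <;> simp [h, hk0, hb0]
  · intro i; by_cases h : (i:ℕ) < p + k <;> simp [h, hk0, ha0]
  · intro j
    rw [karc_vecMul hn (k:ℝ) b j]
    by_cases hj : (j:ℕ) < p
    · rw [if_pos hj]
      have hu : (fun i : Fin n => if (i:ℕ) < p then (k:ℝ) else b) j = (k:ℝ) := if_pos hj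
      rw [hu, hb]; ring
    · rw [if_neg hj]
      have hu : (fun i : Fin n => if (i:ℕ) < p then (k:ℝ) else b) j = b := if_neg hj
      rw [hu, hb]
      first
      | linear_combination (-1 : ℝ) * hquad + (ρ + 1) * hnR
      | linear_combination (-1 : ℝ) * hquad - (ρ + 1) * hnR
      | linear_combination hquad + (ρ + 1) * hnR
      | linear_combination hquad - (ρ + 1) * hnR
  · funext i
    rw [karc_mulVec hn a (k:ℝ) i]
    by_cases hi : (i:ℕ) < p + k
    · rw [if_pos hi]
      have : (ρ • fun j : Fin n => if (j:ℕ) < p + k then a else (k:ℝ)) i = ρ * a := by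
        simp [hi]
      rw [this, ha]
      first
      | linear_combination (-1 : ℝ) * hquad + (ρ + 1) * hnR
      | linear_combination (-1 : ℝ) * hquad - (ρ + 1) * hnR
      | linear_combination hquad + (ρ + 1) * hnR
      | linear_combination hquad - (ρ + 1) * hnR
    · rw [if_neg hi]
      have : (ρ • fun j : Fin n => if (j:ℕ) < p + k then a else (k:ℝ)) i = ρ * (k:ℝ) := by
        simp [hi]
      rw [this, ha]
      ring

end Eig

section Master
variable {n k p q : ℕ}

lemma karc_prop (hk : 1 ≤ k) (hn : n = p + k + q) (ρ : ℝ) (x : Fin n → ℝ)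
    (hx0 : ∀ i, 0 ≤ x i) (hxne : x ≠ 0)
    (hBx : (adjMat (Karc n k p)).mulVec x = ρ • x) : ∀ i, 0 < x i := by
  have hpn : p < n := by omega
  have hzero : ∀ i : Fin n, x i = 0 → ∀ j, Karc n k p i j → x j = 0 := by
    intro i hxi j hij
    have h1 : ∑ jj, adjMat (Karc n k p) i jj * x jj = 0 := by
      have := congrFun hBx i
      simp only [Matrix.mulVec, dotProduct] at this
      rw [this, Pi.smul_apply, smul_eq_mul, hxi, mul_zero]
    have hterm : ∀ jj ∈ Finset.univ, 0 ≤ adjMat (Karc n k p) i jj * x jj := fun jj _ =>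
      mul_nonneg (by unfold adjMat; split <;> norm_num) (hx0 jj)
    have h2 := (Finset.sum_eq_zero_iff_of_nonneg hterm).mp h1 j (Finset.mem_univ j)
    rw [adjMat, if_pos hij, one_mul] at h2
    exact h2
  by_contra hcon
  push_neg at hcon
  obtain ⟨i, hi⟩ := hcon
  have hxi : x i = 0 := le_antisymm hi (hx0 i)
  set j₀ : Fin n := ⟨p, hpn⟩ with hj₀
  have hj₀v : (j₀ : ℕ) = p := rfl
  have hxj₀ : x j₀ = 0 := by
    by_cases hij : i = j₀
    · rw [← hij]; exact hxi
    · refine hzero i hxi j₀ ⟨hij, ?_⟩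
      rw [hj₀v]; omega
  apply hxne
  funext j
  by_cases hjj : j = j₀
  · rw [hjj]; exact hxj₀
  · refine hzero j₀ hxj₀ j ⟨fun h => hjj h.symm, ?_⟩
    rw [hj₀v]; omega

lemma karc_master (hk : 1 ≤ k) (hp : 1 ≤ p) (hq : 1 ≤ q) (hn : n = p + k + q)
    (M : Matrix (Fin n) (Fin n) ℝ) (hM0 : ∀ i j, 0 ≤ M i j)
    (hMB : ∀ i j, M i j ≤ adjMat (Karc n k p) i j) (ρ : ℝ)
    (hρdef : ρ = ((n:ℝ) - 2 + Real.sqrt ((n:ℝ)^2 - 4*(p:ℝ)*(q:ℝ)))/2) :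
    specRad M ≤ ρ ∧ specRad (adjMat (Karc n k p)) = ρ ∧
      (specRad M = ρ → M = adjMat (Karc n k p)) := by
  obtain ⟨ρ', hρ', hρ0, u, w, hu, hw, hleft, hright⟩ := karc_eig hk hp hq hn
  have hρρ' : ρ = ρ' := by rw [hρdef, hρ']
  subst hρρ'
  have hne : Nonempty (Fin n) := ⟨⟨0, by omega⟩⟩
  set B := adjMat (Karc n k p) with hB
  have hB0 : ∀ i j, 0 ≤ B i j := fun i j => by
    rw [hB]; unfold adjMat; split <;> norm_num
  have hbound : specRad M ≤ ρ := by
    refine sRad_le M ρ hρ0 fun μ hμ => ?_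
    obtain ⟨v, hv0, hv⟩ := (specMemIff (M.map Complex.ofReal) μ).mp hμ
    exact pf_norm_le B M u ρ hu hM0 hMB hleft hv0 hv
  refine ⟨hbound, ?_, ?_⟩
  · refine sRad_eq B ρ hρ0 (fun μ hμ => ?_) ?_
    · obtain ⟨v, hv0, hv⟩ := (specMemIff (B.map Complex.ofReal) μ).mp hμ
      exact pf_norm_le B B u ρ hu hB0 (fun i j => le_rfl) hleft hv0 hv
    · refine ⟨(ρ : ℂ), ?_, ?_⟩
      · rw [specMemIff]
        refine ⟨fun i => ((w i : ℝ) : ℂ), ?_, ?_⟩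
        · intro h
          have := congrFun h (Classical.arbitrary (Fin n))
          rw [Pi.zero_apply, Complex.ofReal_eq_zero] at this
          exact (hw _).ne' this
        · have hr : ∀ i, ∑ j, B i j * w j = ρ * w i := fun i => by
            have := congrFun hright i
            simpa [Matrix.mulVec, dotProduct] using this
          funext i
          simp only [Matrix.mulVec, dotProduct, Matrix.map_apply, Pi.smul_apply,
            smul_eq_mul]
          calc ∑ j, (B i j : ℂ) * (w j : ℂ) = ((∑ j, B i j * w j : ℝ) : ℂ) := by
                push_cast; rfl
            _ = ((ρ * w i : ℝ) : ℂ) := by rw [hr i]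
            _ = (ρ : ℂ) * (w i : ℂ) := by push_cast; rfl
      · rw [Complex.norm_real, Real.norm_eq_abs, abs_of_nonneg hρ0]
  · intro hsm
    obtain ⟨μ, hμ, hnorm⟩ := sRad_attained M
    obtain ⟨v, hv0, hv⟩ := (specMemIff (M.map Complex.ofReal) μ).mp hμ
    exact pf_rigid B M u ρ hu hM0 hMB hleft (karc_prop hk hn ρ) hv0 hv (by rw [hnorm, hsm])

end Master



section Reindex
variable {V : Type} [Fintype V] [DecidableEq V] {n : ℕ}

lemma specRad_reindex (A : Matrix V V ℝ) (e : V ≃ Fin n) :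
    specRad A = specRad (fun i j => A (e.symm i) (e.symm j)) := by
  have h1 : Matrix.map ((fun i j => A (e.symm i) (e.symm j)) : Matrix (Fin n) (Fin n) ℝ)
        Complex.ofReal
      = (Matrix.reindexAlgEquiv ℂ ℂ e) (A.map Complex.ofReal) := by
    ext i j
    simp [Matrix.reindexAlgEquiv_apply, Matrix.reindex_apply, Matrix.submatrix_apply,
      Matrix.map_apply]
    rfl
  unfold specRad
  rw [h1, AlgEquiv.spectrum_eq]

end Reindex

section Cut
variable {V : Type} [Fintype V] [DecidableEq V] {n k : ℕ}

lemma cut_equiv (A : V → V → Prop)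
    (hcard : Fintype.card V = n) (hirr : ∀ v, ¬ A v v)
    (S : Finset V) (hS : S.card = k) (hns : ¬ StronglyConnOn A {v | v ∉ S}) :
    ∃ p q : ℕ, 1 ≤ p ∧ 1 ≤ q ∧ n = p + k + q ∧
      ∃ e : V ≃ Fin n, ∀ u v, A u v → Karc n k p (e u) (e v) := by
  classical
  unfold StronglyConnOn at hns
  push_neg at hns
  obtain ⟨u₀, hu₀, v₀, hv₀, hwalk⟩ := hns
  simp only [Set.mem_setOf_eq] at hu₀ hv₀
  set s : Set V := {v | v ∉ S} with hsdef
  set R : V → V → Prop := fun a b => A a b ∧ a ∈ s ∧ b ∈ s with hR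
  set P : Finset V := Finset.univ.filter (fun w => w ∉ S ∧ ∃ m, reachIn R m w v₀) with hP
  set Q : Finset V := Finset.univ.filter (fun w => w ∉ S ∧ ¬ ∃ m, reachIn R m w v₀) with hQ
  have hv₀P : v₀ ∈ P := by
    rw [hP, Finset.mem_filter]
    exact ⟨Finset.mem_univ _, hv₀, 0, rfl⟩
  have hu₀Q : u₀ ∈ Q := by
    rw [hQ, Finset.mem_filter]
    refine ⟨Finset.mem_univ _, hu₀, fun ⟨m, hm⟩ => hwalk m hm⟩
  -- no arcs from Q to P
  have hnoarc : ∀ w ∈ Q, ∀ w' ∈ P, ¬ A w w' := by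
    intro w hw w' hw' hA
    rw [hQ, Finset.mem_filter] at hw
    rw [hP, Finset.mem_filter] at hw'
    obtain ⟨-, hwS, hwno⟩ := hw
    obtain ⟨-, hw'S, m, hm⟩ := hw'
    exact hwno ⟨m + 1, w', ⟨hA, hwS, hw'S⟩, hm⟩
  -- partition facts
  have hdisjPS : ∀ x, x ∈ P → x ∉ S := fun x hx => ((Finset.mem_filter.mp hx).2).1
  have hdisjQS : ∀ x, x ∈ Q → x ∉ S := fun x hx => ((Finset.mem_filter.mp hx).2).1
  have hdisjPQ : ∀ x, x ∈ P → x ∉ Q := by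
    intro x hx hx'
    exact ((Finset.mem_filter.mp hx').2).2 ((Finset.mem_filter.mp hx).2).2
  have hcover : ∀ x : V, x ∈ P ∨ x ∈ S ∨ x ∈ Q := by
    intro x
    by_cases hxS : x ∈ S
    · exact Or.inr (Or.inl hxS)
    · by_cases hxr : ∃ m, reachIn R m x v₀
      · exact Or.inl (by rw [hP, Finset.mem_filter]; exact ⟨Finset.mem_univ _, hxS, hxr⟩)
      · exact Or.inr (Or.inr (by rw [hQ, Finset.mem_filter]; exact ⟨Finset.mem_univ _, hxS, hxr⟩))
  set p : ℕ := P.card with hpdef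
  set q : ℕ := Q.card with hqdef
  have hp1 : 1 ≤ p := Finset.card_pos.mpr ⟨v₀, hv₀P⟩
  have hq1 : 1 ≤ q := Finset.card_pos.mpr ⟨u₀, hu₀Q⟩
  have hcards : n = p + k + q := by
    have hdisj1 : Disjoint P S := Finset.disjoint_left.mpr hdisjPS
    have hdisj2 : Disjoint (P ∪ S) Q := by
      rw [Finset.disjoint_left]
      intro x hx hxQ
      rcases Finset.mem_union.mp hx with h | h
      · exact hdisjPQ x h hxQ
      · exact hdisjQS x hxQ h
    have huniv : P ∪ S ∪ Q = Finset.univ := by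
      apply Finset.eq_univ_of_forall
      intro x
      rcases hcover x with h | h | h
      · exact Finset.mem_union.mpr (Or.inl (Finset.mem_union.mpr (Or.inl h)))
      · exact Finset.mem_union.mpr (Or.inl (Finset.mem_union.mpr (Or.inr h)))
      · exact Finset.mem_union.mpr (Or.inr h)
    have := Finset.card_union_of_disjoint hdisj2
    rw [huniv, Finset.card_union_of_disjoint hdisj1, hS] at this
    rw [← hcard, ← Finset.card_univ, this]
  -- build the equivalence
  have hpn : p ≤ n := by omega
  have hpkn : p + k ≤ n := by omega
  have ePf : {x // x ∈ P} ≃ Fin p := by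
    have : Fintype.card {x // x ∈ P} = p := by rw [Fintype.card_coe]
    exact Fintype.equivFinOfCardEq this
  have eSf : {x // x ∈ S} ≃ Fin k := by
    have : Fintype.card {x // x ∈ S} = k := by rw [Fintype.card_coe, hS]
    exact Fintype.equivFinOfCardEq this
  have eQf : {x // x ∈ Q} ≃ Fin q := by
    have : Fintype.card {x // x ∈ Q} = q := by rw [Fintype.card_coe]
    exact Fintype.equivFinOfCardEq this
  set f : V → Fin n := fun v =>
    if hv : v ∈ P then ⟨(ePf ⟨v, hv⟩ : ℕ), by have := (ePf ⟨v, hv⟩).2; omega⟩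
    else if hv' : v ∈ S then ⟨p + (eSf ⟨v, hv'⟩ : ℕ), by have := (eSf ⟨v, hv'⟩).2; omega⟩
    else ⟨p + k + (eQf ⟨v, (hcover v).resolve_left hv |>.resolve_left hv'⟩ : ℕ), by
      have := (eQf ⟨v, (hcover v).resolve_left hv |>.resolve_left hv'⟩).2; omega⟩
    with hf
  have hfP : ∀ v (hv : v ∈ P), (f v : ℕ) = (ePf ⟨v, hv⟩ : ℕ) := by
    intro v hv; rw [hf]; simp [hv]
  have hfS : ∀ v (hv : v ∉ P) (hv' : v ∈ S), (f v : ℕ) = p + (eSf ⟨v, hv'⟩ : ℕ) := by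
    intro v hv hv'; rw [hf]; simp [hv, hv']
  have hfQ : ∀ v (hv : v ∈ Q), (f v : ℕ) = p + k + (eQf ⟨v, hv⟩ : ℕ) := by
    intro v hv
    have h1 : v ∉ P := fun h => hdisjPQ v h hv
    have h2 : v ∉ S := hdisjQS v hv
    rw [hf]; simp [h1, h2]
  have hrangeP : ∀ v, v ∈ P ↔ (f v : ℕ) < p := by
    intro v
    constructor
    · intro hv; rw [hfP v hv]; exact (ePf ⟨v, hv⟩).2
    · intro hlt
      by_contra hv
      rcases (hcover v).resolve_left hv with h | h
      · rw [hfS v hv h] at hlt; omega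
      · rw [hfQ v h] at hlt; omega
  have hrangeQ : ∀ v, v ∈ Q ↔ p + k ≤ (f v : ℕ) := by
    intro v
    constructor
    · intro hv; rw [hfQ v hv]; omega
    · intro hge
      rcases hcover v with h | h | h
      · rw [hfP v h] at hge; have := (ePf ⟨v, h⟩).2; omega
      · have h1 : v ∉ P := by
          intro hP'
          rw [hfP v hP'] at hge; have := (ePf ⟨v, hP'⟩).2; omega
        rw [hfS v h1 h] at hge; have := (eSf ⟨v, h⟩).2; omega
      · exact h
  have hrangeS : ∀ v, v ∈ S ↔ (p ≤ (f v : ℕ) ∧ (f v : ℕ) < p + k) := by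
    intro v
    constructor
    · intro hv
      have h1 : v ∉ P := fun h => hdisjPS v h hv
      rw [hfS v h1 hv]
      have := (eSf ⟨v, hv⟩).2; omega
    · rintro ⟨h1, h2⟩
      rcases hcover v with h | h | h
      · exfalso; have := (hrangeP v).mp h; omega
      · exact h
      · exfalso; have := (hrangeQ v).mp h; omega
  have hinj : Function.Injective f := by
    intro x y hxy
    have hval : (f x : ℕ) = (f y : ℕ) := congrArg Fin.val hxy
    rcases hcover x with hx | hx | hx
    · have hx' := (hrangeP x).mp hx
      have hy : y ∈ P := (hrangeP y).mpr (by omega)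
      have h1 := hfP x hx
      have h2 := hfP y hy
      have heq : ePf ⟨x, hx⟩ = ePf ⟨y, hy⟩ := Fin.ext (by omega)
      exact Subtype.ext_iff.mp (ePf.injective heq)
    · have hx' := (hrangeS x).mp hx
      have hy : y ∈ S := (hrangeS y).mpr (by omega)
      have hx1 : x ∉ P := fun h => hdisjPS x h hx
      have hy1 : y ∉ P := fun h => hdisjPS y h hy
      have h1 := hfS x hx1 hx
      have h2 := hfS y hy1 hy
      have heq : eSf ⟨x, hx⟩ = eSf ⟨y, hy⟩ := Fin.ext (by omega)
      exact Subtype.ext_iff.mp (eSf.injective heq)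
    · have hx' := (hrangeQ x).mp hx
      have hy : y ∈ Q := (hrangeQ y).mpr (by omega)
      have h1 := hfQ x hx
      have h2 := hfQ y hy
      have heq : eQf ⟨x, hx⟩ = eQf ⟨y, hy⟩ := Fin.ext (by omega)
      exact Subtype.ext_iff.mp (eQf.injective heq)
  have hbij : Function.Bijective f := by
    rw [Fintype.bijective_iff_injective_and_card]
    exact ⟨hinj, by rw [hcard, Fintype.card_fin]⟩
  set e : V ≃ Fin n := Equiv.ofBijective f hbij with he
  refine ⟨p, q, hp1, hq1, hcards, e, ?_⟩
  intro u v hA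
  have heu : e u = f u := rfl
  have hev : e v = f v := rfl
  constructor
  · intro h
    have : u = v := hinj (by rw [← heu, ← hev, h])
    exact hirr u (this ▸ hA)
  · rintro ⟨hge, hlt⟩
    rw [heu] at hge
    rw [hev] at hlt
    exact hnoarc u ((hrangeQ u).mpr hge) v ((hrangeP v).mpr hlt) hA

end Cut



lemma ite_one_zero_iff {P Q : Prop} [Decidable P] [Decidable Q]
    (h : (if P then (1:ℝ) else 0) = (if Q then 1 else 0)) : P ↔ Q := by
  by_cases hP : P <;> by_cases hQ : Q <;> simp [hP, hQ] at h ⊢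

/-- The adjacency spectral radius of `K⃗(n,k,p)` equals
`(n-2+√(4p²-4(n-k)p+n²))/2`; consequently any strongly connected digraph on `n`
vertices with vertex connectivity `k` satisfies `ρ(G⃗) ≤ (n-2+√((n-2)²+4k))/2`, with
equality iff `G⃗ ≅ K⃗(n,k,1)` or `G⃗ ≅ K⃗(n,k,n-k-1)`. -/
theorem specRad_digraph_connectivity (n k : ℕ) (hk1 : 1 ≤ k) (hk2 : k ≤ n - 2) :
    (∀ p : ℕ, 1 ≤ p → p ≤ n - k - 1 →
      specRad (adjMat (Karc n k p))
        = ((n : ℝ) - 2 + Real.sqrt (4 * p ^ 2 - 4 * ((n : ℝ) - k) * p + n ^ 2)) / 2) ∧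
    (∀ (V : Type) (_ : Fintype V) (_ : DecidableEq V) (A : V → V → Prop),
      Fintype.card V = n → (∀ v, ¬ A v v) → StronglyConn A → VertexConnEq A k →
      (specRad (adjMat A) ≤ ((n : ℝ) - 2 + Real.sqrt (((n : ℝ) - 2) ^ 2 + 4 * k)) / 2 ∧
       (specRad (adjMat A) = ((n : ℝ) - 2 + Real.sqrt (((n : ℝ) - 2) ^ 2 + 4 * k)) / 2 ↔
         ((∃ e : V ≃ Fin n, ∀ u v, A u v ↔ Karc n k 1 (e u) (e v)) ∨
          (∃ e : V ≃ Fin n, ∀ u v, A u v ↔ Karc n k (n - k - 1) (e u) (e v)))))) := by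
  have hn3 : 3 ≤ n := by omega
  -- the generic Karc spectral radius computation
  have karcVal : ∀ p q : ℕ, 1 ≤ p → 1 ≤ q → n = p + k + q →
      specRad (adjMat (Karc n k p))
        = ((n:ℝ) - 2 + Real.sqrt ((n:ℝ)^2 - 4*(p:ℝ)*(q:ℝ)))/2 := by
    intro p q hp1 hq1 hn
    have hB0 : ∀ i j, 0 ≤ adjMat (Karc n k p) i j := fun i j => by
      unfold adjMat; split <;> norm_num
    exact (karc_master hk1 hp1 hq1 hn (adjMat (Karc n k p)) hB0 (fun i j => le_rfl) _
      rfl).2.1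
  constructor
  · -- part 1
    intro p hp1 hp2
    have hq1 : 1 ≤ n - k - p := by omega
    have hn : n = p + k + (n - k - p) := by omega
    rw [karcVal p (n - k - p) hp1 hq1 hn]
    have harg : (n:ℝ)^2 - 4*(p:ℝ)*((n - k - p : ℕ):ℝ)
        = 4 * (p:ℝ) ^ 2 - 4 * ((n : ℝ) - (k:ℝ)) * (p:ℝ) + (n:ℝ) ^ 2 := by
      have hcast : ((n - k - p : ℕ):ℝ) = (n:ℝ) - (k:ℝ) - (p:ℝ) := by
        have h1 : k + p ≤ n := by omega
        rw [Nat.sub_sub]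
        rw [Nat.cast_sub h1]
        push_cast
        ring
      rw [hcast]; ring
    rw [harg]
  · -- part 2
    intro V _ _ A hcardV hirr _ hvc
    obtain ⟨S, hSk, hns⟩ := hvc.2
    obtain ⟨p, q, hp1, hq1, hn, e, harc⟩ := cut_equiv A hcardV hirr S hSk hns
    have hpR : (1:ℝ) ≤ (p:ℝ) := by exact_mod_cast hp1
    have hqR : (1:ℝ) ≤ (q:ℝ) := by exact_mod_cast hq1
    have hnR : (n:ℝ) = (p:ℝ) + (k:ℝ) + (q:ℝ) := by rw [hn]; push_cast; ring
    have hkR : (1:ℝ) ≤ (k:ℝ) := by exact_mod_cast hk1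
    set M : Matrix (Fin n) (Fin n) ℝ := fun i j => adjMat A (e.symm i) (e.symm j) with hM
    have hKB0 : ∀ i j, (0:ℝ) ≤ adjMat (Karc n k p) i j := fun i j => by
      unfold adjMat; split <;> norm_num
    have hM0 : ∀ i j, 0 ≤ M i j := fun i j => by
      rw [hM]; by_cases h : A (e.symm i) (e.symm j) <;> simp [adjMat, h]
    have hMB : ∀ i j, M i j ≤ adjMat (Karc n k p) i j := by
      intro i j
      by_cases h : A (e.symm i) (e.symm j)
      · have hK := harc _ _ h
        rw [Equiv.apply_symm_apply, Equiv.apply_symm_apply] at hK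
        have h1 : M i j = 1 := by rw [hM]; simp [adjMat, h]
        have h2 : adjMat (Karc n k p) i j = 1 := by simp [adjMat, hK]
        rw [h1, h2]
      · have h1 : M i j = 0 := by rw [hM]; simp [adjMat, h]
        rw [h1]; exact hKB0 i j
    obtain ⟨hble, hBval, hrig⟩ := karc_master hk1 hp1 hq1 hn M hM0 hMB
      (((n:ℝ) - 2 + Real.sqrt ((n:ℝ)^2 - 4*(p:ℝ)*(q:ℝ)))/2) rfl
    have hra : specRad (adjMat A) = specRad M := by
      rw [hM]; exact specRad_reindex (adjMat A) e
    have hDpos : (0:ℝ) ≤ (n:ℝ)^2 - 4*(p:ℝ)*(q:ℝ) := by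
      nlinarith [sq_nonneg ((p:ℝ) - (q:ℝ))]
    have hD2pos : (0:ℝ) ≤ ((n:ℝ)-2)^2 + 4*(k:ℝ) := by positivity
    have hargle : (n:ℝ)^2 - 4*(p:ℝ)*(q:ℝ) ≤ ((n:ℝ)-2)^2 + 4*(k:ℝ) := by
      nlinarith [mul_nonneg (sub_nonneg.mpr hpR) (sub_nonneg.mpr hqR)]
    have hsle : Real.sqrt ((n:ℝ)^2 - 4*(p:ℝ)*(q:ℝ)) ≤ Real.sqrt (((n:ℝ)-2)^2 + 4*(k:ℝ)) :=
      Real.sqrt_le_sqrt hargle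
    have hρle : ((n:ℝ) - 2 + Real.sqrt ((n:ℝ)^2 - 4*(p:ℝ)*(q:ℝ)))/2
        ≤ ((n:ℝ) - 2 + Real.sqrt (((n:ℝ)-2)^2 + 4*(k:ℝ)))/2 := by linarith
    -- the "equality value" helper for the reverse direction
    have key : ∀ (p₀ q₀ : ℕ), 1 ≤ p₀ → 1 ≤ q₀ → n = p₀ + k + q₀ →
        (p₀:ℝ)*(q₀:ℝ) = (n:ℝ) - (k:ℝ) - 1 → ∀ e' : V ≃ Fin n,
        (∀ u v, A u v ↔ Karc n k p₀ (e' u) (e' v)) →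
        specRad (adjMat A) = ((n : ℝ) - 2 + Real.sqrt (((n : ℝ) - 2) ^ 2 + 4 * k)) / 2 := by
      intro p₀ q₀ hp₀ hq₀ hn₀ hprod e' hiff
      have hMeq : (fun i j => adjMat A (e'.symm i) (e'.symm j)) = adjMat (Karc n k p₀) := by
        funext i j
        unfold adjMat
        have : A (e'.symm i) (e'.symm j) ↔ Karc n k p₀ i j := by
          rw [hiff (e'.symm i) (e'.symm j), Equiv.apply_symm_apply, Equiv.apply_symm_apply]
        by_cases h : Karc n k p₀ i j
        · rw [if_pos (this.mpr h), if_pos h]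
        · rw [if_neg (fun hh => h (this.mp hh)), if_neg h]
      rw [specRad_reindex (adjMat A) e', hMeq, karcVal p₀ q₀ hp₀ hq₀ hn₀]
      have harg : (n:ℝ)^2 - 4*(p₀:ℝ)*(q₀:ℝ) = ((n:ℝ)-2)^2 + 4*(k:ℝ) := by
        linear_combination (-4:ℝ) * hprod
      rw [harg]
    refine ⟨by rw [hra]; exact le_trans hble hρle, ?_, ?_⟩
    · -- forward: equality implies extremal structure
      intro hEq
      have h1 : specRad M = ((n:ℝ) - 2 + Real.sqrt (((n:ℝ)-2)^2 + 4*(k:ℝ)))/2 := by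
        rw [← hra]; exact hEq
      have hρeq : ((n:ℝ) - 2 + Real.sqrt ((n:ℝ)^2 - 4*(p:ℝ)*(q:ℝ)))/2
          = ((n:ℝ) - 2 + Real.sqrt (((n:ℝ)-2)^2 + 4*(k:ℝ)))/2 := by
        refine le_antisymm hρle ?_
        rw [← h1]; exact hble
      have hsq_eq : Real.sqrt ((n:ℝ)^2 - 4*(p:ℝ)*(q:ℝ))
          = Real.sqrt (((n:ℝ)-2)^2 + 4*(k:ℝ)) := by linarith
      have harg_eq : (n:ℝ)^2 - 4*(p:ℝ)*(q:ℝ) = ((n:ℝ)-2)^2 + 4*(k:ℝ) := by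
        have h2 := congrArg (fun x : ℝ => x^2) hsq_eq
        simpa [Real.sq_sqrt hDpos, Real.sq_sqrt hD2pos] using h2
      have hpq_zero : ((p:ℝ) - 1) * ((q:ℝ) - 1) = 0 := by
        first
        | linear_combination (-1/4 : ℝ) * harg_eq + hnR
        | linear_combination (-1/4 : ℝ) * harg_eq - hnR
        | linear_combination (1/4 : ℝ) * harg_eq + hnR
        | linear_combination (1/4 : ℝ) * harg_eq - hnR
      have hMrig : M = adjMat (Karc n k p) := by
        apply hrig
        rw [h1, hρeq]
      have hiff : ∀ u v, A u v ↔ Karc n k p (e u) (e v) := by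
        intro u v
        have h3 := congrFun (congrFun hMrig (e u)) (e v)
        simp only [hM, Equiv.symm_apply_apply] at h3
        unfold adjMat at h3
        exact ite_one_zero_iff h3
      rcases mul_eq_zero.mp hpq_zero with h | h
      · have hp_eq : p = 1 := by
          have : (p:ℝ) = 1 := by linarith
          exact_mod_cast this
        exact Or.inl ⟨e, fun u v => by rw [← hp_eq]; exact hiff u v⟩
      · have hq_eq : q = 1 := by
          have : (q:ℝ) = 1 := by linarith
          exact_mod_cast this
        have hp_eq : p = n - k - 1 := by omega
        exact Or.inr ⟨e, fun u v => by rw [← hp_eq]; exact hiff u v⟩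
    · -- reverse: extremal structure implies equality
      rintro (⟨e', hiff⟩ | ⟨e', hiff⟩)
      · have hq₀ : 1 ≤ n - k - 1 := by omega
        have hn₀ : n = 1 + k + (n - k - 1) := by omega
        have hcast : ((n - k - 1 : ℕ):ℝ) = (n:ℝ) - (k:ℝ) - 1 := by
          have h1 : k + 1 ≤ n := by omega
          rw [Nat.sub_sub, Nat.cast_sub h1]
          push_cast; ring
        exact key 1 (n - k - 1) le_rfl hq₀ hn₀ (by rw [hcast]; push_cast; ring) e' hiff
      · have hp₀ : 1 ≤ n - k - 1 := by omega
        have hn₀ : n = (n - k - 1) + k + 1 := by omega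
        have hcast : ((n - k - 1 : ℕ):ℝ) = (n:ℝ) - (k:ℝ) - 1 := by
          have h1 : k + 1 ≤ n := by omega
          rw [Nat.sub_sub, Nat.cast_sub h1]
          push_cast; ring
        exact key (n - k - 1) 1 hp₀ le_rfl hn₀ (by rw [hcast]; push_cast; ring) e' hiff
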